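/- Let f be a non-constant entire function. For a, b ∈ ℂ define the f-path distance d_f(a,b) as the infimum, over all continuously differentiable paths γ : [0,1] → ℂ with γ(0) = a and γ(1) = b, of the length of the image path f ∘ γ, namely l_f(γ) = ∫₀¹ |f'(γ(t))| · |γ'(t)| dt. Then d_f is a metric on ℂ: for all a, b, c ∈ ℂ, d_f(a,b) = d_f(b,a); d_f(a,b) = 0 if and only if a = b; and d_f(a,c) ≤ d_f(a,b) + d_f(b,c). -/

import Mathlib

open intervalIntegral Set

namespace FPathAux

noncomputable def len (f : ℂ → ℂ) (γ : ℝ → ℂ) : ℝ :=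
  ∫ t in (0:ℝ)..1, ‖deriv f (γ t)‖ * ‖deriv γ t‖

def S (f : ℂ → ℂ) (a b : ℂ) : Set ℝ :=
  {l : ℝ | ∃ γ : ℝ → ℂ, ContDiff ℝ 1 γ ∧ γ 0 = a ∧ γ 1 = b ∧ l = len f γ}

lemma len_mem {f : ℂ → ℂ} {a b : ℂ} {γ : ℝ → ℂ} (h : ContDiff ℝ 1 γ) (h0 : γ 0 = a)
    (h1 : γ 1 = b) : len f γ ∈ S f a b := ⟨γ, h, h0, h1, rfl⟩

lemma S_nonempty (f : ℂ → ℂ) (a b : ℂ) : (S f a b).Nonempty := by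
  refine ⟨len f (fun t => a + t • (b - a)), len_mem ?_ (by simp) (by simp)⟩
  exact contDiff_const.add (contDiff_id.smul contDiff_const)

lemma S_nonneg {f : ℂ → ℂ} {a b : ℂ} : ∀ l ∈ S f a b, 0 ≤ l := by
  rintro l ⟨γ, _, _, _, rfl⟩
  exact intervalIntegral.integral_nonneg zero_le_one
    (fun u _ => mul_nonneg (norm_nonneg _) (norm_nonneg _))

lemma S_bdd {f : ℂ → ℂ} {a b : ℂ} : BddBelow (S f a b) := ⟨0, fun l hl => S_nonneg l hl⟩

lemma S_subset_symm (f : ℂ → ℂ) (a b : ℂ) : S f a b ⊆ S f b a := by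
  rintro l ⟨γ, hγ, h0, h1, rfl⟩
  refine ⟨fun t => γ (1 - t), hγ.comp (contDiff_const.sub contDiff_id),
    by simpa using h1, by simpa using h0, ?_⟩
  have hdγ : Differentiable ℝ γ := hγ.differentiable one_ne_zero
  have hd : ∀ t : ℝ, HasDerivAt (fun t => γ (1 - t)) ((-1 : ℝ) • deriv γ (1 - t)) t := by
    intro t
    exact ((hdγ (1 - t)).hasDerivAt).scomp t ((hasDerivAt_id t).const_sub 1)
  calc len f γ
      = ∫ t in (0:ℝ)..1,
          (fun s => ‖deriv f (γ s)‖ * ‖deriv γ s‖) (1 - t) := by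
        rw [intervalIntegral.integral_comp_sub_left
          (fun s => ‖deriv f (γ s)‖ * ‖deriv γ s‖) 1]
        norm_num [len]
    _ = len f (fun t => γ (1 - t)) := by
        unfold len
        refine intervalIntegral.integral_congr fun t _ => ?_
        rw [(hd t).deriv, norm_smul]
        simp


lemma hasDerivAt_comp_f {f : ℂ → ℂ} (hf : Differentiable ℂ f) {γ : ℝ → ℂ}
    (hγ : ContDiff ℝ 1 γ) (t : ℝ) :
    HasDerivAt (fun s => f (γ s)) (deriv f (γ t) * deriv γ t) t :=
  ((hf (γ t)).hasDerivAt).comp t ((hγ.differentiable one_ne_zero t).hasDerivAt)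

lemma key_lower {f : ℂ → ℂ} (hf : Differentiable ℂ f) {a b : ℂ} {r m : ℝ} (hr : 0 < r)
    (hm : ∀ z ∈ Metric.sphere a r, m ≤ ‖f z - f a‖)
    (hb : r < dist b a) : ∀ l ∈ S f a b, m ≤ l := by
  rintro l ⟨γ, hγ, h0, h1, rfl⟩
  have hγc : Continuous γ := hγ.continuous
  have hγ' : Continuous (deriv γ) := hγ.continuous_deriv le_rfl
  have hf' : Continuous (deriv f) := (hf.contDiff (n := 1)).continuous_deriv le_rfl
  -- find a time where γ hits the sphere
  have hIVT : r ∈ (fun t => dist (γ t) a) '' Icc (0:ℝ) 1 := by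
    apply intermediate_value_Icc zero_le_one ((Continuous.dist hγc continuous_const).continuousOn)
    constructor
    · rw [h0]; simpa using hr.le
    · simpa [h1] using hb.le
  obtain ⟨t₀, ht₀, hg⟩ := hIVT
  have hsp : γ t₀ ∈ Metric.sphere a r := Metric.mem_sphere.mpr hg
  -- FTC bound
  have hFcont : Continuous fun s => deriv f (γ s) * deriv γ s := (hf'.comp hγc).mul hγ'
  have hFTC : (∫ s in (0:ℝ)..t₀, deriv f (γ s) * deriv γ s) = f (γ t₀) - f (γ 0) :=
    intervalIntegral.integral_eq_sub_of_hasDerivAt (fun s _ => hasDerivAt_comp_f hf hγ s)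
      (hFcont.intervalIntegrable _ _)
  have habs : ∀ s : ℝ, ‖deriv f (γ s)‖ * ‖deriv γ s‖
      = ‖deriv f (γ s) * deriv γ s‖ := by
    intro s; rw [norm_mul]
  calc m ≤ ‖f (γ t₀) - f a‖ := hm _ hsp
    _ = ‖∫ s in (0:ℝ)..t₀, deriv f (γ s) * deriv γ s‖ := by
        rw [hFTC, h0]
    _ ≤ ∫ s in (0:ℝ)..t₀, ‖deriv f (γ s) * deriv γ s‖ :=
        intervalIntegral.norm_integral_le_integral_norm ht₀.1
    _ ≤ ∫ s in (0:ℝ)..1, ‖deriv f (γ s) * deriv γ s‖ := by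
        apply intervalIntegral.integral_mono_interval le_rfl ht₀.1 ht₀.2
        · exact Filter.Eventually.of_forall fun s => norm_nonneg _
        · exact (hFcont.norm.intervalIntegrable _ _)
    _ = len f γ := by unfold len; exact intervalIntegral.integral_congr fun s _ => (habs s).symm

lemma S_pos {f : ℂ → ℂ} (hf : Differentiable ℂ f)
    (hnc : ¬∃ c : ℂ, ∀ w : ℂ, f w = c) {a b : ℂ} (hab : a ≠ b) :
    ∃ m > 0, ∀ l ∈ S f a b, m ≤ l := by
  have hA : AnalyticAt ℂ f a := hf.analyticAt a
  have hne : ∀ᶠ z in nhdsWithin a {a}ᶜ, f z ≠ f a := by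
    rcases hA.eventually_eq_or_eventually_ne analyticAt_const with h | h
    · exfalso
      apply hnc
      refine ⟨f a, fun w => ?_⟩
      have hfa : AnalyticOnNhd ℂ f univ := fun z _ => hf.analyticAt z
      exact hfa.eqOn_of_preconnected_of_eventuallyEq
        (fun z _ => analyticAt_const) isPreconnected_univ (mem_univ a) h (mem_univ w)
    · exact h
  rw [eventually_nhdsWithin_iff, Metric.eventually_nhds_iff] at hne
  obtain ⟨ε, hε, hball⟩ := hne
  have hdab : 0 < dist b a := dist_pos.mpr (Ne.symm hab)
  set r := min (ε / 2) (dist b a / 2) with hrdef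
  have hr : 0 < r := lt_min (half_pos hε) (half_pos hdab)
  have hrε : r < ε := lt_of_le_of_lt (min_le_left _ _) (half_lt_self hε)
  have hrb : r < dist b a := lt_of_le_of_lt (min_le_right _ _) (half_lt_self hdab)
  obtain ⟨z₀, hz₀, hmin⟩ := (isCompact_sphere a r).exists_isMinOn
    (NormedSpace.sphere_nonempty.mpr hr.le)
    ((continuous_norm.comp (hf.continuous.sub continuous_const)).continuousOn)
  refine ⟨‖f z₀ - f a‖, ?_, key_lower hf hr (fun z hz => hmin hz) hrb⟩
  have hz₀a : z₀ ≠ a := by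
    intro h
    rw [Metric.mem_sphere, h] at hz₀
    simp at hz₀
    exact hr.ne hz₀
  have : f z₀ ≠ f a := by
    have hd : dist z₀ a < ε := by
      rw [Metric.mem_sphere] at hz₀; rw [hz₀]; exact hrε
    exact hball hd hz₀a
  exact norm_pos_iff.mpr (sub_ne_zero.mpr this)


lemma phi_hasDeriv (s : ℝ) : HasDerivAt (fun s : ℝ => 3*s^2 - 2*s^3) (6*s*(1-s)) s := by
  have h := ((hasDerivAt_pow 2 s).const_mul 3).sub ((hasDerivAt_pow 3 s).const_mul 2)
  exact h.congr_deriv (by ring)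

lemma concat {f : ℂ → ℂ} (hf : Differentiable ℂ f) {a b c : ℂ} {γ₁ γ₂ : ℝ → ℂ}
    (h₁ : ContDiff ℝ 1 γ₁) (h₂ : ContDiff ℝ 1 γ₂)
    (h10 : γ₁ 0 = a) (h11 : γ₁ 1 = b) (h20 : γ₂ 0 = b) (h21 : γ₂ 1 = c) :
    len f γ₁ + len f γ₂ ∈ S f a c := by
  have hd₁ : Differentiable ℝ γ₁ := h₁.differentiable one_ne_zero
  have hd₂ : Differentiable ℝ γ₂ := h₂.differentiable one_ne_zero
  set φ : ℝ → ℝ := fun s => 3*s^2 - 2*s^3 with hφdef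
  set ψ₁ : ℝ → ℝ := fun t => φ (2*t) with hψ₁def
  set ψ₂ : ℝ → ℝ := fun t => φ (2*t - 1) with hψ₂def
  set p : ℝ → ℝ := fun t => 6*(2*t)*(1-(2*t)) * 2 with hpdef
  set q : ℝ → ℝ := fun t => 6*(2*t-1)*(1-(2*t-1)) * 2 with hqdef
  have hinner : ∀ t : ℝ, HasDerivAt (fun t : ℝ => 2*t) 2 t := fun t => by
    simpa using (hasDerivAt_id t).const_mul 2
  have hψ₁ : ∀ t : ℝ, HasDerivAt ψ₁ (p t) t := fun t =>
    (phi_hasDeriv (2*t)).comp t (hinner t)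
  have hψ₂ : ∀ t : ℝ, HasDerivAt ψ₂ (q t) t := fun t =>
    (phi_hasDeriv (2*t-1)).comp t ((hinner t).sub_const 1) (h := fun x : ℝ => 2*x - 1)
  have hpc : Continuous p := by fun_prop
  have hqc : Continuous q := by fun_prop
  have hψ₁c : Continuous ψ₁ := by fun_prop
  have hψ₂c : Continuous ψ₂ := by fun_prop
  set u : ℝ → ℂ := fun t => γ₁ (ψ₁ t) with hudef
  set v : ℝ → ℂ := fun t => γ₂ (ψ₂ t) with hvdef
  have hu : ∀ t : ℝ, HasDerivAt u (p t • deriv γ₁ (ψ₁ t)) t := fun t =>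
    ((hd₁ (ψ₁ t)).hasDerivAt).scomp t (hψ₁ t)
  have hv : ∀ t : ℝ, HasDerivAt v (q t • deriv γ₂ (ψ₂ t)) t := fun t =>
    ((hd₂ (ψ₂ t)).hasDerivAt).scomp t (hψ₂ t)
  -- special values
  have hψ₁0 : ψ₁ 0 = 0 := by norm_num [hψ₁def, hφdef]
  have hψ₁h : ψ₁ (1/2) = 1 := by norm_num [hψ₁def, hφdef]
  have hψ₂h : ψ₂ (1/2) = 0 := by norm_num [hψ₂def, hφdef]
  have hψ₂1 : ψ₂ 1 = 1 := by norm_num [hψ₂def, hφdef]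
  have hph : p (1/2) = 0 := by norm_num [hpdef]
  have hqh : q (1/2) = 0 := by norm_num [hqdef]
  have huh : u (1/2) = b := by rw [hudef]; simp only [hψ₁h]; exact h11
  have hvh : v (1/2) = b := by rw [hvdef]; simp only [hψ₂h]; exact h20
  set δ : ℝ → ℂ := fun t => if t ≤ (1/2 : ℝ) then u t else v t with hδdef
  set D : ℝ → ℂ := fun t => if t ≤ (1/2 : ℝ) then p t • deriv γ₁ (ψ₁ t)
    else q t • deriv γ₂ (ψ₂ t) with hDdef
  have hδu : ∀ t : ℝ, t ≤ 1/2 → δ t = u t := fun t ht => if_pos ht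
  have hδv : ∀ t : ℝ, 1/2 ≤ t → δ t = v t := by
    intro t ht
    rcases eq_or_lt_of_le ht with h | h
    · rw [hδdef]; simp only [← h, if_pos le_rfl]; rw [huh, ← hvh]
    · exact if_neg (not_le.mpr h)
  have hδD : ∀ t : ℝ, HasDerivAt δ (D t) t := by
    intro t
    rcases lt_trichotomy t (1/2) with h | h | h
    · have hD : D t = p t • deriv γ₁ (ψ₁ t) := if_pos h.le
      rw [hD]
      apply (hu t).congr_of_eventuallyEq
      filter_upwards [Iio_mem_nhds h] with s hs
      exact hδu s (le_of_lt hs)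
    · subst h
      have hDt : D (1/2 : ℝ) = 0 := by rw [hDdef]; simp only [if_pos le_rfl, hph, zero_smul]
      rw [hDt]
      have hI : HasDerivWithinAt δ 0 (Iic (1/2 : ℝ)) (1/2) := by
        have := (hu (1/2)).hasDerivWithinAt (s := Iic (1/2 : ℝ))
        rw [hph, zero_smul] at this
        exact this.congr (fun s hs => hδu s hs) (hδu _ le_rfl)
      have hIc : HasDerivWithinAt δ 0 (Ici (1/2 : ℝ)) (1/2) := by
        have := (hv (1/2)).hasDerivWithinAt (s := Ici (1/2 : ℝ))
        rw [hqh, zero_smul] at this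
        exact this.congr (fun s hs => hδv s hs) (hδv _ le_rfl)
      have := hI.union hIc
      rwa [Iic_union_Ici, hasDerivWithinAt_univ] at this
    · have hD : D t = q t • deriv γ₂ (ψ₂ t) := if_neg (not_le.mpr h)
      rw [hD]
      apply (hv t).congr_of_eventuallyEq
      filter_upwards [Ioi_mem_nhds h] with s hs
      exact hδv s (le_of_lt hs)
  have hderivδ : deriv δ = D := funext fun t => (hδD t).deriv
  have hDc : Continuous D := by
    rw [hDdef]
    apply Continuous.if_le
    · exact hpc.smul ((h₁.continuous_deriv le_rfl).comp hψ₁c)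
    · exact hqc.smul ((h₂.continuous_deriv le_rfl).comp hψ₂c)
    · exact continuous_id
    · exact continuous_const
    · intro x hx
      rw [hx, hph, hqh, zero_smul, zero_smul]
  have hδ : ContDiff ℝ 1 δ := by
    rw [contDiff_one_iff_deriv]
    exact ⟨fun t => (hδD t).differentiableAt, by rw [hderivδ]; exact hDc⟩
  refine ⟨δ, hδ, ?_, ?_, ?_⟩
  · rw [hδu 0 (by norm_num), hudef]; simp only [hψ₁0]; exact h10
  · rw [hδv 1 (by norm_num), hvdef]; simp only [hψ₂1]; exact h21
  -- the length computation
  have hf' : Continuous (deriv f) := (hf.contDiff (n := 1)).continuous_deriv le_rfl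
  have hintc : Continuous fun t => ‖deriv f (δ t)‖ * ‖deriv δ t‖ := by
    rw [hderivδ]
    exact ((continuous_norm.comp (hf'.comp hδ.continuous))).mul
      (continuous_norm.comp hDc)
  set g₁ : ℝ → ℝ := fun s => ‖deriv f (γ₁ s)‖ * ‖deriv γ₁ s‖ with hg₁def
  set g₂ : ℝ → ℝ := fun s => ‖deriv f (γ₂ s)‖ * ‖deriv γ₂ s‖ with hg₂def
  have hg₁c : Continuous g₁ :=
    (continuous_norm.comp (hf'.comp h₁.continuous)).mul
      (continuous_norm.comp (h₁.continuous_deriv le_rfl))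
  have hg₂c : Continuous g₂ :=
    (continuous_norm.comp (hf'.comp h₂.continuous)).mul
      (continuous_norm.comp (h₂.continuous_deriv le_rfl))
  have habs : ∀ (r : ℝ) (z : ℂ), 0 ≤ r → ‖r • z‖ = r * ‖z‖ := by
    intro r z hr
    rw [norm_smul, Real.norm_eq_abs, abs_of_nonneg hr]
  have hsplit : len f δ
      = (∫ t in (0:ℝ)..(1/2), ‖deriv f (δ t)‖ * ‖deriv δ t‖)
        + ∫ t in (1/2:ℝ)..1, ‖deriv f (δ t)‖ * ‖deriv δ t‖ :=
    (intervalIntegral.integral_add_adjacent_intervals (hintc.intervalIntegrable _ _)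
      (hintc.intervalIntegrable _ _)).symm
  have hleft : (∫ t in (0:ℝ)..(1/2), ‖deriv f (δ t)‖ * ‖deriv δ t‖)
      = len f γ₁ := by
    have heq : ∀ t ∈ uIcc (0:ℝ) (1/2),
        ‖deriv f (δ t)‖ * ‖deriv δ t‖ = p t • (g₁ ∘ ψ₁) t := by
      intro t ht
      rw [uIcc_of_le (by norm_num)] at ht
      have hp0 : 0 ≤ p t := by
        rw [hpdef]
        have h1 : (0:ℝ) ≤ 2*t := by linarith [ht.1]
        have h2 : (0:ℝ) ≤ 1 - 2*t := by linarith [ht.2]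
        positivity
      rw [hδu t ht.2, hderivδ, hDdef]
      simp only [if_pos ht.2]
      rw [habs _ _ hp0]
      simp only [Function.comp, hg₁def, hudef, smul_eq_mul]
      ring
    rw [intervalIntegral.integral_congr heq,
      intervalIntegral.integral_comp_smul_deriv (fun x _ => hψ₁ x) hpc.continuousOn hg₁c,
      hψ₁0, hψ₁h]
    rfl
  have hright : (∫ t in (1/2:ℝ)..1, ‖deriv f (δ t)‖ * ‖deriv δ t‖)
      = len f γ₂ := by
    have heq : ∀ t ∈ uIcc (1/2:ℝ) 1,
        ‖deriv f (δ t)‖ * ‖deriv δ t‖ = q t • (g₂ ∘ ψ₂) t := by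
      intro t ht
      rw [uIcc_of_le (by norm_num)] at ht
      have hq0 : 0 ≤ q t := by
        rw [hqdef]
        have h1 : (0:ℝ) ≤ 2*t - 1 := by linarith [ht.1]
        have h2 : (0:ℝ) ≤ 1 - (2*t - 1) := by linarith [ht.2]
        positivity
      have hDt : deriv δ t = q t • deriv γ₂ (ψ₂ t) := by
        rw [hderivδ, hDdef]
        rcases eq_or_lt_of_le ht.1 with h | h
        · simp only [← h, if_pos le_rfl, hph, hqh, zero_smul]
        · simp only [if_neg (not_le.mpr h)]
      rw [hδv t ht.1, hDt, habs _ _ hq0]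
      simp only [Function.comp, hg₂def, hvdef, smul_eq_mul]
      ring
    rw [intervalIntegral.integral_congr heq,
      intervalIntegral.integral_comp_smul_deriv (fun x _ => hψ₂ x) hqc.continuousOn hg₂c,
      hψ₂h, hψ₂1]
    rfl
  rw [hsplit, hleft, hright]

end FPathAux

/-- The `f`-path distance `d_f(a,b)`: the infimum of the `f`-lengths
`l_f(γ) = ∫₀¹ |f'(γ(t))|·|γ'(t)| dt` of the image paths `f ∘ γ` over all continuously
differentiable paths `γ` from `a` to `b`. -/
noncomputable def fPathDist (f : ℂ → ℂ) (a b : ℂ) : ℝ :=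
  sInf {l : ℝ | ∃ γ : ℝ → ℂ, ContDiff ℝ 1 γ ∧ γ 0 = a ∧ γ 1 = b ∧
    l = ∫ t in (0 : ℝ)..1, ‖deriv f (γ t)‖ * ‖deriv γ t‖}

lemma fPathDist_eq (f : ℂ → ℂ) (a b : ℂ) : fPathDist f a b = sInf (FPathAux.S f a b) := rfl

open FPathAux in
/-- For a non-constant entire function `f`, the `f`-path distance
`d_f` is a metric on `ℂ`: it is symmetric, vanishes exactly on the diagonal, and
satisfies the triangle inequality. -/
theorem fPathDist_is_metric (f : ℂ → ℂ) (hf : Differentiable ℂ f)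
    (hnc : ¬∃ c : ℂ, ∀ w : ℂ, f w = c) :
    ∀ a b c : ℂ,
      fPathDist f a b = fPathDist f b a ∧
      (fPathDist f a b = 0 ↔ a = b) ∧
      fPathDist f a c ≤ fPathDist f a b + fPathDist f b c := by
  intro a b c
  refine ⟨?_, ⟨?_, ?_⟩, ?_⟩
  · rw [fPathDist_eq, fPathDist_eq]
    exact congrArg sInf (Set.Subset.antisymm (S_subset_symm f a b) (S_subset_symm f b a))
  · -- zero implies eq
    intro h0
    by_contra hab
    obtain ⟨m, hm, hle⟩ := S_pos hf hnc hab
    have : m ≤ fPathDist f a b := by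
      rw [fPathDist_eq]
      exact le_csInf (S_nonempty f a b) hle
    rw [h0] at this
    exact absurd this (not_le.mpr hm)
  · -- eq implies zero
    rintro rfl
    have h0mem : (0 : ℝ) ∈ S f a a := by
      refine ⟨fun _ => a, contDiff_const, rfl, rfl, ?_⟩
      simp [len]
    rw [fPathDist_eq]
    refine le_antisymm (csInf_le S_bdd h0mem) (le_csInf (S_nonempty f a a) S_nonneg)
  · -- triangle inequality
    refine le_of_forall_pos_le_add fun ε hε => ?_
    obtain ⟨l₁, hl₁, hlt₁⟩ := Real.lt_sInf_add_pos (S_nonempty f a b) (half_pos hε)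
    obtain ⟨l₂, hl₂, hlt₂⟩ := Real.lt_sInf_add_pos (S_nonempty f b c) (half_pos hε)
    obtain ⟨γ₁, hγ₁, h10, h11, rfl⟩ := hl₁
    obtain ⟨γ₂, hγ₂, h20, h21, rfl⟩ := hl₂
    have hmem := concat hf hγ₁ hγ₂ h10 h11 h20 h21
    have hle : fPathDist f a c ≤ len f γ₁ + len f γ₂ := by
      rw [fPathDist_eq]
      exact csInf_le S_bdd hmem
    rw [fPathDist_eq, fPathDist_eq]
    calc fPathDist f a c ≤ len f γ₁ + len f γ₂ := hle
      _ ≤ (sInf (S f a b) + ε/2) + (sInf (S f b c) + ε/2) := add_le_add hlt₁.le hlt₂.le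
      _ = sInf (S f a b) + sInf (S f b c) + ε := by ring
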